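/- Let F be a vector subspace of ℓ∞ (the space of bounded real sequences) which is complete with respect to the uniformity induced from the product topology on ℝ^ω = (ℕ → ℝ). Then the topology on F induced from the product topology of ℝ^ω coincides with the topology on F induced by the supremum norm ‖x‖ = sup_n |x_n|; in particular, F with the induced topology is a Banach space. -/

import Mathlib

open scoped ENNReal Uniformity
open Filter Topology TopologicalSpace Set

set_option maxHeartbeats 1000000 in
theorem aux_linfty (F : Submodule ℝ (ℕ → ℝ))
    (hF_bdd : ∀ x ∈ F, ∃ C : ℝ, ∀ n : ℕ, |x n| ≤ C)
    (hF_complete : IsComplete (F : Set (ℕ → ℝ)))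
    (g : F → lp (fun _ : ℕ => ℝ) ∞) (hg : ∀ x : F, (g x : ℕ → ℝ) = (x : ℕ → ℝ)) :
    Topology.IsInducing g ∧ IsComplete (Set.range g) := by
  haveI : CompleteSpace F := hF_complete.completeSpace_coe
  haveI : (𝓤 F).IsCountablyGenerated := Filter.comap.isCountablyGenerated _ _
  haveI : IsUniformAddGroup F := IsUniformAddGroup.comap F.subtype
  set J : F →ₗ[ℝ] lp (fun _ : ℕ => ℝ) ∞ :=
    { toFun := g
      map_add' := fun a b => Subtype.ext (by
        show ((g (a + b) : ℕ → ℝ)) = ((g a + g b : lp (fun _ : ℕ => ℝ) ∞) : ℕ → ℝ)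
        rw [show ((g a + g b : lp (fun _ : ℕ => ℝ) ∞) : ℕ → ℝ) = (g a : ℕ → ℝ) + (g b : ℕ → ℝ)
          from lp.coeFn_add _ _, hg, hg, hg]; rfl)
      map_smul' := fun c a => Subtype.ext (by
        show ((g (c • a) : ℕ → ℝ)) = ((c • g a : lp (fun _ : ℕ => ℝ) ∞) : ℕ → ℝ)
        rw [show ((c • g a : lp (fun _ : ℕ => ℝ) ∞) : ℕ → ℝ) = c • (g a : ℕ → ℝ)
          from lp.coeFn_smul _ _, hg, hg]; rfl) } with hJ
  have hjc : g = fun x => J x := rfl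
  -- continuity of `g` via Baire category
  set S : ℕ → Set F := fun n => {x : F | ∀ k, |(x : ℕ → ℝ) k| ≤ (n : ℝ)} with hS
  have hSclosed : ∀ n, IsClosed (S n) := by
    intro n
    have : S n = ⋂ k, {x : F | |(x : ℕ → ℝ) k| ≤ (n : ℝ)} := by
      ext x; simp [hS, Set.mem_iInter]
    rw [this]
    exact isClosed_iInter fun k =>
      isClosed_le ((continuous_apply k).comp continuous_subtype_val).abs continuous_const
  have hSunion : (⋃ n, S n) = Set.univ := by
    ext x
    simp only [Set.mem_iUnion, Set.mem_univ, iff_true]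
    obtain ⟨C, hC⟩ := hF_bdd x.1 x.2
    exact ⟨⌈C⌉₊, fun k => (hC k).trans (Nat.le_ceil C)⟩
  obtain ⟨N, hN⟩ := nonempty_interior_of_iUnion_of_closed hSclosed hSunion
  obtain ⟨x₀, hx₀⟩ := hN
  have hmemnhds : interior (S N) ∈ 𝓝 x₀ := isOpen_interior.mem_nhds hx₀
  have hV1 : {v : F | x₀ + v ∈ S N} ∈ 𝓝 (0 : F) := by
    have hc : Tendsto (fun v : F => x₀ + v) (𝓝 0) (𝓝 x₀) := by
      simpa using (continuous_add_left x₀ :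
        Continuous fun v : F => x₀ + v).tendsto (0 : F)
    filter_upwards [hc hmemnhds] with v hv using interior_subset hv
  have hV2 : {v : F | x₀ - v ∈ S N} ∈ 𝓝 (0 : F) := by
    have hc : Tendsto (fun v : F => x₀ - v) (𝓝 0) (𝓝 x₀) := by
      simpa using (continuous_sub_left x₀ :
        Continuous fun v : F => x₀ - v).tendsto (0 : F)
    filter_upwards [hc hmemnhds] with v hv using interior_subset hv
  set W : Set F := {v : F | x₀ + v ∈ S N} ∩ {v : F | x₀ - v ∈ S N} with hW
  have hWnhds : W ∈ 𝓝 (0 : F) := inter_mem hV1 hV2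
  have hbound : ∀ v ∈ W, ‖g v‖ ≤ (N : ℝ) := by
    rintro v ⟨h1, h2⟩
    refine lp.norm_le_of_forall_le (by positivity) fun k => ?_
    have e1 : |((x₀ + v : F) : ℕ → ℝ) k| ≤ (N : ℝ) := h1 k
    have e2 : |((x₀ - v : F) : ℕ → ℝ) k| ≤ (N : ℝ) := h2 k
    have hvk : (v : ℕ → ℝ) k = (((x₀ + v : F) : ℕ → ℝ) k - ((x₀ - v : F) : ℕ → ℝ) k) / 2 := by
      simp only [Submodule.coe_add, Submodule.coe_sub, Pi.add_apply, Pi.sub_apply]; ring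
    have hgv : ‖(g v : ℕ → ℝ) k‖ = |(v : ℕ → ℝ) k| := by rw [hg, Real.norm_eq_abs]
    rw [hgv, abs_le] at *
    rw [hvk]
    constructor <;> [linarith [e1.1, e2.2]; linarith [e1.2, e2.1]]
  have hcontAt : ContinuousAt g 0 := by
    rw [ContinuousAt, show g 0 = 0 from map_zero J, Metric.tendsto_nhds]
    intro ε hε
    set c : ℝ := ε / (2 * ((N : ℝ) + 1)) with hc
    have hc0 : 0 < c := by positivity
    have hsm : Tendsto (fun v : F => c⁻¹ • v) (𝓝 0) (𝓝 0) := by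
      simpa using (continuous_const_smul c⁻¹ : Continuous fun v : F => c⁻¹ • v).tendsto (0 : F)
    filter_upwards [hsm hWnhds] with v hv
    have hnorm : ‖g (c⁻¹ • v)‖ ≤ (N : ℝ) := hbound _ hv
    have hjv : g v = c • g (c⁻¹ • v) := by
      rw [hjc]
      simp only []
      rw [← map_smul J, smul_smul, mul_inv_cancel₀ (ne_of_gt hc0), one_smul]
    rw [dist_zero_right, hjv, norm_smul, Real.norm_eq_abs, abs_of_pos hc0]
    have h1 : c * ‖g (c⁻¹ • v)‖ ≤ c * N := mul_le_mul_of_nonneg_left hnorm hc0.le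
    have h2 : c * (N : ℝ) < ε := by
      rw [hc, div_mul_eq_mul_div, div_lt_iff₀ (by positivity)]
      nlinarith [Nat.cast_nonneg (α := ℝ) N]
    linarith
  have hcont : Continuous g := continuous_of_continuousAt_zero J hcontAt
  -- coordinate evaluations are continuous on lp ∞
  have hcoe : Continuous fun f : lp (fun _ : ℕ => ℝ) ∞ => (f : ℕ → ℝ) := by
    refine continuous_pi fun k => ?_
    refine (LipschitzWith.of_dist_le_mul (K := 1) fun f g => ?_).continuous
    rw [NNReal.coe_one, one_mul, dist_eq_norm, dist_eq_norm]
    have h := lp.norm_apply_le_norm ENNReal.top_ne_zero (f - g) k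
    rwa [lp.coeFn_sub, Pi.sub_apply] at h
  have hind : Topology.IsInducing g := by
    refine ⟨le_antisymm (continuous_iff_le_induced.mp hcont) ?_⟩
    have h1 : (instTopologicalSpaceSubtype : TopologicalSpace F) =
        TopologicalSpace.induced g (TopologicalSpace.induced
          (fun f : lp (fun _ : ℕ => ℝ) ∞ => (f : ℕ → ℝ)) Pi.topologicalSpace) := by
      rw [induced_compose]
      have : ((fun f : lp (fun _ : ℕ => ℝ) ∞ => (f : ℕ → ℝ)) ∘ g) = Subtype.val := by
        funext x; exact hg x
      rw [this]
      rfl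
    rw [h1]
    exact induced_mono (continuous_iff_le_induced.mp hcoe)
  have huind : IsUniformInducing g := by
    refine ⟨?_⟩
    rw [uniformity_eq_comap_nhds_zero (lp (fun _ : ℕ => ℝ) ∞), uniformity_eq_comap_nhds_zero ↥F,
      comap_comap]
    have h1 : ((fun p : (lp (fun _ : ℕ => ℝ) ∞) × (lp (fun _ : ℕ => ℝ) ∞) => p.2 - p.1)
        ∘ fun x : F × F => (g x.1, g x.2)) = g ∘ fun p : F × F => p.2 - p.1 := by
      funext p
      simp only [Function.comp_apply]
      exact (map_sub J _ _).symm
    rw [h1, ← comap_comap, show (0 : lp (fun _ : ℕ => ℝ) ∞) = g 0 from (map_zero J).symm,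
      ← hind.nhds_eq_comap]
  exact ⟨hind, huind.isComplete_range⟩



open scoped ENNReal

/-- Let `F` be a vector subspace of `ℓ∞` (the bounded real sequences) which is complete
with respect to the uniformity induced from the product topology on `ℝ^ω = ℕ → ℝ`.
Then the topology on `F` induced from the product topology coincides with the topology
induced by the supremum norm, i.e. the natural inclusion of `F` (with the product-induced
topology) into the Banach space `ℓ^∞(ℕ)` is inducing; moreover its range is complete,
so `F` with the supremum norm is a Banach space. -/
theorem complete_subspace_of_linfty_product_topology_is_sup_norm_topology
    (F : Submodule ℝ (ℕ → ℝ))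
    (hF_bdd : ∀ x ∈ F, ∃ C : ℝ, ∀ n : ℕ, |x n| ≤ C)
    (hF_complete : IsComplete (F : Set (ℕ → ℝ))) :
    Topology.IsInducing (fun x : F =>
      (⟨(x : ℕ → ℝ), memℓp_infty (by
          obtain ⟨C, hC⟩ := hF_bdd x.1 x.2
          exact ⟨C, by rintro r ⟨n, rfl⟩; simpa [Real.norm_eq_abs] using hC n⟩)⟩ :
        lp (fun _ : ℕ => ℝ) ∞)) ∧
    IsComplete (Set.range (fun x : F =>
      (⟨(x : ℕ → ℝ), memℓp_infty (by
          obtain ⟨C, hC⟩ := hF_bdd x.1 x.2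
          exact ⟨C, by rintro r ⟨n, rfl⟩; simpa [Real.norm_eq_abs] using hC n⟩)⟩ :
        lp (fun _ : ℕ => ℝ) ∞))) :=
  aux_linfty F hF_bdd hF_complete _ (fun _ => rfl)
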